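/- For every n ≥ 2 there exist binary strings s₁, …, sₙ ∈ {0,1}ⁿ, each of length n, such that every SLP G over the alphabet {0,1} that contains nonterminals A₁, …, Aₙ with val_G(Aᵢ) = sᵢ for all 1 ≤ i ≤ n has size |G| > n²/(2·log₂(n) + 1) − n − 1. In particular, every concatenation circuit computing the set {s₁, …, sₙ} has size Ω(n²/log n). -/

import Mathlib

/-- A straight-line program (SLP) over the terminal alphabet `α`:  a context-free
grammar with nonterminals `Fin N`, a start nonterminal, exactly one rule
`A → rhs A` per nonterminal `A` (with `rhs A` a word over nonterminals and
terminals), such that the relation "`B` occurs in the right-hand side of `A`"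
is acyclic (equivalently, it admits a strictly decreasing ranking). -/
structure SLP (α : Type) where
  N : ℕ
  start : Fin N
  rhs : Fin N → List (Fin N ⊕ α)
  acyclic : ∃ ord : Fin N → ℕ, ∀ A B : Fin N, Sum.inl B ∈ rhs A → ord B < ord A

namespace SLP

/-- Fuel-based expansion of a nonterminal. -/
def valFuel {α : Type} (G : SLP α) : ℕ → Fin G.N → List α
  | 0, _ => []
  | fuel+1, A =>
      ((G.rhs A).map (fun s =>
        match s with
        | Sum.inl B => G.valFuel fuel B
        | Sum.inr a => [a])).flatten

/-- The word derived from nonterminal `A`.  By acyclicity, any chain of nested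
nonterminal occurrences has length at most `G.N`, so fuel `G.N` fully expands
every nonterminal. -/
def val {α : Type} (G : SLP α) (A : Fin G.N) : List α := G.valFuel G.N A

/-- The size of an SLP: the total length of all right-hand sides. -/
def size {α : Type} (G : SLP α) : ℕ := ∑ A : Fin G.N, (G.rhs A).length

end SLP
namespace ConcatLB


/-- List-indexed, fuel-based evaluation of a grammar given as a list of
right-hand sides over the symbol alphabet ℕ (0 ↦ false, 1 ↦ true, c+2 ↦ nonterminal c). -/
def evalF (RL : List (List ℕ)) : ℕ → ℕ → List Bool
  | 0, _ => []
  | fuel+1, j => ((RL.getD j []).map (fun c =>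
      match c with
      | 0 => [false]
      | 1 => [true]
      | (c+2) => evalF RL fuel c)).flatten

def evalStep (RL : List (List ℕ)) (fuel : ℕ) (c : ℕ) : List Bool :=
  match c with
  | 0 => [false]
  | 1 => [true]
  | (c+2) => evalF RL fuel c

lemma evalF_succ (RL : List (List ℕ)) (fuel j : ℕ) :
    evalF RL (fuel+1) j = ((RL.getD j []).map (evalStep RL fuel)).flatten := rfl

/-- Split a flagged list into blocks, each block ending right after a `true` flag. -/
def chunks {α : Type} : List (Bool × α) → List (List α)
  | [] => []
  | (b, a) :: r =>
    if b then [a] :: chunks r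
    else match chunks r with
      | [] => [[a]]
      | c :: cs => (a :: c) :: cs

/-- Flag the last element of a block. -/
def markBlock {α : Type} : List α → List (Bool × α)
  | [] => []
  | [a] => [(true, a)]
  | a :: rest => (false, a) :: markBlock rest

def mark {α : Type} (l : List (List α)) : List (Bool × α) := (l.map markBlock).flatten

lemma chunks_markBlock_append {α : Type} (blk : List α) (hblk : blk ≠ []) (tl : List (Bool × α)) :
    chunks (markBlock blk ++ tl) = blk :: chunks tl := by
  induction blk with
  | nil => exact absurd rfl hblk
  | cons a rest ih =>
    cases rest with
    | nil => simp [markBlock, chunks]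
    | cons b rest' =>
      have : markBlock (a :: b :: rest') = (false, a) :: markBlock (b :: rest') := rfl
      rw [this, List.cons_append]
      show chunks ((false, a) :: (markBlock (b :: rest') ++ tl)) = _
      rw [chunks, ih (by simp)]
      simp

lemma chunks_mark {α : Type} (l : List (List α)) (h : ∀ blk ∈ l, blk ≠ []) :
    chunks (mark l) = l := by
  induction l with
  | nil => rfl
  | cons blk rest ih =>
    have : mark (blk :: rest) = markBlock blk ++ mark rest := by simp [mark]
    rw [this, chunks_markBlock_append blk (h blk (by simp)), ih (fun b hb => h b (by simp [hb]))]

lemma length_markBlock {α : Type} (blk : List α) : (markBlock blk).length = blk.length := by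
  induction blk with
  | nil => rfl
  | cons a rest ih =>
    cases rest with
    | nil => rfl
    | cons b rest' =>
      show ((false, a) :: markBlock (b :: rest')).length = _
      simp only [List.length_cons] at *
      omega

lemma snd_mem_of_mem_markBlock {α : Type} {blk : List α} {x : Bool × α}
    (hx : x ∈ markBlock blk) : x.2 ∈ blk := by
  induction blk with
  | nil => simp [markBlock] at hx
  | cons a rest ih =>
    cases rest with
    | nil => simp [markBlock] at hx; simp [hx]
    | cons b rest' =>
      rw [show markBlock (a :: b :: rest') = (false, a) :: markBlock (b :: rest') from rfl] at hx
      rcases List.mem_cons.1 hx with h | h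
      · simp [h]
      · exact List.mem_cons_of_mem _ (ih h)

lemma length_mark {α : Type} (l : List (List α)) :
    (mark l).length = (l.map List.length).sum := by
  induction l with
  | nil => rfl
  | cons blk rest ih =>
    simp [mark, length_markBlock] at *
    omega

lemma mem_mark {α : Type} {l : List (List α)} {x : Bool × α} (hx : x ∈ mark l) :
    ∃ blk ∈ l, x.2 ∈ blk := by
  rcases List.mem_flatten.1 hx with ⟨ml, hml, hxml⟩
  rcases List.mem_map.1 hml with ⟨blk, hblk, rfl⟩
  exact ⟨blk, hblk, snd_mem_of_mem_markBlock hxml⟩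

lemma length_le_sum (l : List ℕ) (h : ∀ x ∈ l, 1 ≤ x) : l.length ≤ l.sum := by
  induction l with
  | nil => simp
  | cons a rest ih =>
    simp only [List.length_cons, List.sum_cons]
    have := ih (fun x hx => h x (by simp [hx]))
    have := h a (by simp)
    omega

/-- Generic flatten-comparison lemma. -/
lemma flatten_filterMap_map {σ τ : Type} (fm : σ → Option τ) (g : τ → List Bool)
    (f : σ → List Bool) :
    ∀ (l : List σ),
      (∀ x ∈ l, (∀ y, fm x = some y → g y = f x) ∧ (fm x = none → f x = [])) →
      ((l.filterMap fm).map g).flatten = (l.map f).flatten := by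
  intro l
  induction l with
  | nil => intro _; rfl
  | cons a rest ih =>
    intro h
    rw [List.filterMap_cons]
    have ha := h a (by simp)
    cases hfa : fm a with
    | none =>
      rw [List.map_cons, List.flatten_cons, ha.2 hfa, List.nil_append]
      exact ih (fun x hx => h x (by simp [hx]))
    | some y =>
      rw [List.map_cons, List.flatten_cons, List.map_cons, List.flatten_cons, ha.1 y hfa]
      rw [ih (fun x hx => h x (by simp [hx]))]


/-- rank of a nonterminal with respect to an order witness -/
def rnk {N : ℕ} (ord : Fin N → ℕ) (A : Fin N) : ℕ :=
  (Finset.univ.filter fun B => ord B < ord A).card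

lemma rnk_lt_rnk {N : ℕ} (ord : Fin N → ℕ) {A B : Fin N} (h : ord B < ord A) :
    rnk ord B < rnk ord A := by
  apply Finset.card_lt_card
  rw [Finset.ssubset_iff_of_subset]
  · exact ⟨B, by simp [h], by simp⟩
  · intro C hC
    simp only [Finset.mem_filter, Finset.mem_univ, true_and] at *
    omega

lemma rnk_lt_N {N : ℕ} (ord : Fin N → ℕ) (A : Fin N) : rnk ord A < N := by
  have : (Finset.univ.filter fun B => ord B < ord A) ⊂ Finset.univ := by
    rw [Finset.ssubset_iff_of_subset (Finset.subset_univ _)]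
    exact ⟨A, Finset.mem_univ A, by simp⟩
  have := Finset.card_lt_card this
  simpa [rnk] using this

lemma valFuel_stab {G : SLP Bool} {ord : Fin G.N → ℕ}
    (hord : ∀ A B : Fin G.N, Sum.inl B ∈ G.rhs A → ord B < ord A) :
    ∀ (r : ℕ) (A : Fin G.N) (f₁ f₂ : ℕ), rnk ord A < r → rnk ord A < f₁ → rnk ord A < f₂ →
      G.valFuel f₁ A = G.valFuel f₂ A := by
  intro r
  induction r with
  | zero => intro A f₁ f₂ h; omega
  | succ r ih =>
    intro A f₁ f₂ hr h1 h2
    obtain ⟨g₁, rfl⟩ : ∃ k, f₁ = k+1 := ⟨f₁-1, by omega⟩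
    obtain ⟨g₂, rfl⟩ : ∃ k, f₂ = k+1 := ⟨f₂-1, by omega⟩
    show ((G.rhs A).map _).flatten = ((G.rhs A).map _).flatten
    congr 1
    apply List.map_congr_left
    intro s hs
    cases s with
    | inr a => rfl
    | inl B =>
      have hBA : rnk ord B < rnk ord A := rnk_lt_rnk ord (hord A B hs)
      exact ih B g₁ g₂ (by omega) (by omega) (by omega)

def unrollStep {G : SLP Bool} (s : Fin G.N ⊕ Bool) : List Bool :=
  match s with
  | Sum.inl B => G.val B
  | Sum.inr a => [a]

lemma val_unroll {G : SLP Bool} {ord : Fin G.N → ℕ}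
    (hord : ∀ A B : Fin G.N, Sum.inl B ∈ G.rhs A → ord B < ord A) (A : Fin G.N) :
    G.val A = ((G.rhs A).map unrollStep).flatten := by
  have hN : 0 < G.N := A.pos
  obtain ⟨M, hM⟩ : ∃ M, G.N = M+1 := ⟨G.N - 1, by omega⟩
  have h1 : G.val A = G.valFuel (M+1) A := by rw [SLP.val, hM]
  rw [h1]
  show ((G.rhs A).map _).flatten = _
  congr 1
  apply List.map_congr_left
  intro s hs
  cases s with
  | inr a => rfl
  | inl B =>
    show G.valFuel M B = G.val B
    have hrA : rnk ord A < G.N := rnk_lt_N ord A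
    have hrB : rnk ord B < rnk ord A := rnk_lt_rnk ord (hord A B hs)
    exact valFuel_stab hord G.N B M G.N (by omega) (by omega) (by omega)

lemma val_eq_nil_of_rhs_nil {G : SLP Bool} {ord : Fin G.N → ℕ}
    (hord : ∀ A B : Fin G.N, Sum.inl B ∈ G.rhs A → ord B < ord A) {A : Fin G.N}
    (h : G.rhs A = []) : G.val A = [] := by
  rw [val_unroll hord A, h]; rfl


variable (G : SLP Bool)

/-- The list of nonterminals with nonempty derived word. -/
def Plist : List (Fin G.N) := (List.finRange G.N).filter (fun A => decide (G.val A ≠ []))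

lemma mem_Plist {G : SLP Bool} {A : Fin G.N} : A ∈ Plist G ↔ G.val A ≠ [] := by
  simp [Plist, List.mem_filter]

/-- Translation of a grammar symbol to ℕ, dropping nonterminals with empty value. -/
def fmG : (Fin G.N ⊕ Bool) → Option ℕ := fun s =>
  match s with
  | Sum.inr a => some (cond a 1 0)
  | Sum.inl B => if G.val B = [] then none else some ((Plist G).idxOf B + 2)

/-- The list-form grammar associated to `G`. -/
def RLG : List (List ℕ) := (Plist G).map (fun A => (G.rhs A).filterMap (fmG G))

/-- rank among nonterminals with nonempty value -/
def rnkP (ord : Fin G.N → ℕ) (A : Fin G.N) : ℕ :=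
  (Finset.univ.filter fun B => G.val B ≠ [] ∧ ord B < ord A).card

variable {G}

lemma rnkP_lt_rnkP {ord : Fin G.N → ℕ} {A B : Fin G.N}
    (hvB : G.val B ≠ []) (h : ord B < ord A) : rnkP G ord B < rnkP G ord A := by
  apply Finset.card_lt_card
  rw [Finset.ssubset_iff_of_subset]
  · exact ⟨B, by simp [hvB, h], by simp⟩
  · intro C hC
    simp only [Finset.mem_filter, Finset.mem_univ, true_and] at *
    exact ⟨hC.1, by omega⟩

lemma rnkP_lt_Kf {ord : Fin G.N → ℕ} {A : Fin G.N} (hvA : G.val A ≠ []) :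
    rnkP G ord A < (Finset.univ.filter fun B => G.val B ≠ []).card := by
  apply Finset.card_lt_card
  rw [Finset.ssubset_iff_of_subset]
  · exact ⟨A, by simp [hvA], by simp⟩
  · intro C hC
    simp only [Finset.mem_filter, Finset.mem_univ, true_and] at *
    exact hC.1

lemma Kf_le_size {ord : Fin G.N → ℕ}
    (hord : ∀ A B : Fin G.N, Sum.inl B ∈ G.rhs A → ord B < ord A) :
    (Finset.univ.filter fun B => G.val B ≠ []).card ≤ G.size := by
  have h1 : (Finset.univ.filter fun B => G.val B ≠ []).card • 1 ≤
      ∑ A ∈ (Finset.univ.filter fun B => G.val B ≠ []), (G.rhs A).length := by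
    apply Finset.card_nsmul_le_sum
    intro A hA
    simp only [Finset.mem_filter] at hA
    have : G.rhs A ≠ [] := by
      intro h0
      exact hA.2 (val_eq_nil_of_rhs_nil hord h0)
    exact Nat.one_le_iff_ne_zero.2 (by simpa using this)
  have h2 : ∑ A ∈ (Finset.univ.filter fun B => G.val B ≠ []), (G.rhs A).length ≤ G.size := by
    exact Finset.sum_le_sum_of_subset (Finset.filter_subset _ _)
  simpa using le_trans h1 h2

lemma sum_Plist_le_size : ((Plist G).map (fun A => (G.rhs A).length)).sum ≤ G.size := by
  have h1 : ((Plist G).map (fun A => (G.rhs A).length)).Sublist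
      (((List.finRange G.N)).map (fun A => (G.rhs A).length)) :=
    (List.filter_sublist).map _
  have h2 := h1.sum_le_sum (by intro a _; exact Nat.zero_le a)
  rw [SLP.size, Fin.sum_univ_def]
  exact h2

lemma Plength_le_size {ord : Fin G.N → ℕ}
    (hord : ∀ A B : Fin G.N, Sum.inl B ∈ G.rhs A → ord B < ord A) :
    (Plist G).length ≤ G.size := by
  have h1 : (Plist G).length ≤ ((Plist G).map (fun A => (G.rhs A).length)).sum := by
    have := length_le_sum ((Plist G).map (fun A => (G.rhs A).length)) ?_
    · simpa using this
    · intro x hx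
      rcases List.mem_map.1 hx with ⟨A, hA, rfl⟩
      have : G.rhs A ≠ [] := by
        intro h0
        exact (mem_Plist.1 hA) (val_eq_nil_of_rhs_nil hord h0)
      exact Nat.one_le_iff_ne_zero.2 (by simpa using this)
  exact le_trans h1 sum_Plist_le_size

lemma RLsum_le_size : (((RLG G)).map List.length).sum ≤ G.size := by
  have h1 : ((RLG G).map List.length).sum ≤ ((Plist G).map (fun A => (G.rhs A).length)).sum := by
    rw [RLG, List.map_map]
    apply List.sum_le_sum
    intro A _
    exact List.length_filterMap_le _ _
  exact le_trans h1 sum_Plist_le_size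

lemma getD_RLG {A : Fin G.N} (hA : A ∈ Plist G) :
    (RLG G).getD ((Plist G).idxOf A) [] = (G.rhs A).filterMap (fmG G) := by
  have hidx : (Plist G).idxOf A < (Plist G).length := List.idxOf_lt_length_iff.2 hA
  have hlen : (Plist G).idxOf A < (RLG G).length := by
    rw [RLG, List.length_map]; exact hidx
  rw [List.getD_eq_getElem _ _ hlen]
  simp only [RLG, List.getElem_map]
  rw [List.getElem_idxOf hidx]

lemma transfer {ord : Fin G.N → ℕ}
    (hord : ∀ A B : Fin G.N, Sum.inl B ∈ G.rhs A → ord B < ord A) :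
    ∀ (r : ℕ) (A : Fin G.N), G.val A ≠ [] → ∀ fuel : ℕ,
      rnkP G ord A < r → rnkP G ord A < fuel →
      evalF (RLG G) fuel ((Plist G).idxOf A) = G.val A := by
  intro r
  induction r with
  | zero => intro A _ fuel h; omega
  | succ r ih =>
    intro A hA fuel hr hf
    obtain ⟨f, rfl⟩ : ∃ k, fuel = k+1 := ⟨fuel-1, by omega⟩
    rw [evalF_succ, getD_RLG (mem_Plist.2 hA), val_unroll hord A]
    apply flatten_filterMap_map
    intro x hx
    constructor
    · intro y hy
      cases x with
      | inr a =>
        cases a with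
        | false =>
          simp only [fmG, Option.some_inj] at hy
          rw [← hy]; rfl
        | true =>
          simp only [fmG, Option.some_inj] at hy
          rw [← hy]; rfl
      | inl B =>
        by_cases hB : G.val B = []
        · simp [fmG, hB] at hy
        · simp only [fmG, if_neg hB, Option.some_inj] at hy
          rw [← hy]
          show evalF (RLG G) f ((Plist G).idxOf B) = unrollStep (Sum.inl B)
          have hrB : rnkP G ord B < rnkP G ord A := rnkP_lt_rnkP hB (hord A B hx)
          exact ih B hB f (by omega) (by omega)
    · intro hnone
      cases x with
      | inr a => simp [fmG] at hnone
      | inl B =>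
        by_cases hB : G.val B = []
        · exact hB
        · simp [fmG, hB] at hnone

lemma RLG_blocks_nonempty {ord : Fin G.N → ℕ}
    (hord : ∀ A B : Fin G.N, Sum.inl B ∈ G.rhs A → ord B < ord A) :
    ∀ blk ∈ RLG G, blk ≠ [] := by
  intro blk hblk
  rcases List.mem_map.1 hblk with ⟨A, hA, rfl⟩
  intro h0
  have hvA := mem_Plist.1 hA
  have := transfer hord (rnkP G ord A + 1) A hvA (rnkP G ord A + 1) (by omega) (by omega)
  rw [evalF_succ, getD_RLG hA, h0] at this
  exact hvA this.symm

lemma RLG_symbol_lt {blk : List ℕ} (hblk : blk ∈ RLG G) {c : ℕ} (hc : c ∈ blk) :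
    c < (Plist G).length + 2 := by
  rcases List.mem_map.1 hblk with ⟨A, _, rfl⟩
  rcases List.mem_filterMap.1 hc with ⟨x, _, hx⟩
  cases x with
  | inr a =>
    cases a with
    | false => simp only [fmG, Option.some_inj, Bool.cond_false] at hx; omega
    | true => simp only [fmG, Option.some_inj, Bool.cond_true] at hx; omega
  | inl B =>
    by_cases hB : G.val B = []
    · simp [fmG, hB] at hx
    · simp only [fmG, if_neg hB, Option.some_inj] at hx
      have : B ∈ Plist G := mem_Plist.2 hB
      have := List.idxOf_lt_length_iff.2 this
      omega


lemma exists_encoding (G : SLP Bool) (m0 : ℕ) (hm : G.size ≤ m0) :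
    ∃ e : (Fin m0 → Bool × Fin (m0 + 2)) × Fin (m0 + 1),
      ∀ A : Fin G.N, G.val A ≠ [] →
        ∃ k : Fin (m0 + 1),
          evalF (chunks (((List.finRange m0).map
            (fun p => ((e.1 p).1, ((e.1 p).2 : ℕ)))).take ((e.2 : ℕ)))) m0 (k : ℕ) = G.val A := by
  obtain ⟨ord, hord⟩ := G.acyclic
  set ML := mark (RLG G) with hML
  have hMLlen : ML.length ≤ m0 := by
    rw [hML, length_mark]
    exact le_trans RLsum_le_size hm
  have hsym : ∀ x ∈ ML, x.2 < m0 + 2 := by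
    intro x hx
    rcases mem_mark hx with ⟨blk, hblk, hx2⟩
    have h1 := RLG_symbol_lt hblk hx2
    have h2 := Plength_le_size hord (G := G)
    omega
  refine ⟨⟨fun p => ((ML.getD p (false, 0)).1,
      ⟨(ML.getD p (false, 0)).2 % (m0 + 2), Nat.mod_lt _ (by omega)⟩),
      ⟨ML.length, by omega⟩⟩, ?_⟩
  intro A hA
  have hLE : ((List.finRange m0).map
      (fun p : Fin m0 => ((ML.getD (p : ℕ) (false, 0)).1,
        (((ML.getD (p : ℕ) (false, 0)).2 % (m0 + 2) : ℕ))))).take ML.length = ML := by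
    apply List.ext_getElem
    · simp [hMLlen]
    · intro i h1 h2
      rw [List.getElem_take, List.getElem_map, List.getElem_finRange]
      have hi : i < ML.length := by
        simpa using h2
      have hgd : ML.getD ((Fin.cast (by simp) (⟨i, by simpa using lt_of_lt_of_le hi hMLlen⟩ : Fin ((List.finRange m0).length)) : Fin m0) : ℕ) (false, 0) = ML[i] := by
        have : ((Fin.cast (by simp) (⟨i, by simpa using lt_of_lt_of_le hi hMLlen⟩ : Fin ((List.finRange m0).length)) : Fin m0) : ℕ) = i := rfl
        rw [this, List.getD_eq_getElem _ _ hi]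
      rw [hgd]
      have hmod : ML[i].2 % (m0 + 2) = ML[i].2 :=
        Nat.mod_eq_of_lt (hsym ML[i] (List.getElem_mem hi))
      rw [hmod]
  have hchunks : chunks (((List.finRange m0).map
      (fun p : Fin m0 => ((ML.getD (p : ℕ) (false, 0)).1,
        (((ML.getD (p : ℕ) (false, 0)).2 % (m0 + 2) : ℕ))))).take ML.length) = RLG G := by
    rw [hLE, hML, chunks_mark _ (RLG_blocks_nonempty hord)]
  have hidx : (Plist G).idxOf A < (Plist G).length :=
    List.idxOf_lt_length_iff.2 (mem_Plist.2 hA)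
  have hPle := Plength_le_size hord (G := G)
  refine ⟨⟨(Plist G).idxOf A, by omega⟩, ?_⟩
  show evalF (chunks _) m0 ((Plist G).idxOf A) = G.val A
  have : rnkP G ord A < m0 := by
    have h1 := rnkP_lt_Kf (ord := ord) hA
    have h2 := Kf_le_size hord (G := G)
    omega
  convert transfer hord (rnkP G ord A + 1) A hA m0 (by omega) this using 2
end ConcatLB

/-- A lower bound for concatenation circuits:  there are `n`
binary strings of length `n` such that every SLP over `{0,1}` containing a
nonterminal deriving each of the strings has size greater than
`n²/(2·log₂ n + 1) − n − 1`. -/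
theorem concatenation_circuit_lower_bound (n : ℕ) (hn : 2 ≤ n) :
    ∃ s : Fin n → List Bool, (∀ i, (s i).length = n) ∧
      ∀ (G : SLP Bool) (A : Fin n → Fin G.N),
        (∀ i, G.val (A i) = s i) →
        (n : ℝ) ^ 2 / (2 * Real.logb 2 n + 1) - n - 1 < (G.size : ℝ) := by
  by_contra hc
  push_neg at hc
  set L := Real.logb 2 n with hLdef
  have hn2R : (2:ℝ) ≤ (n:ℝ) := by exact_mod_cast hn
  have hL1 : 1 ≤ L := by
    rw [hLdef]
    calc (1:ℝ) = Real.logb 2 2 := (Real.logb_self_eq_one one_lt_two).symm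
    _ ≤ Real.logb 2 n := Real.logb_le_logb_of_le one_lt_two two_pos hn2R
  have hBpos : 0 ≤ (n:ℝ)^2/(2*L+1) - n - 1 := by
    obtain ⟨G, A, _, hsize⟩ := hc (fun _ => List.replicate n false) (by simp)
    calc (0:ℝ) ≤ G.size := by positivity
    _ ≤ _ := hsize
  set m0 := ⌊(n:ℝ)^2/(2*L+1) - n - 1⌋₊ with hm0
  have hm0le : (m0:ℝ) ≤ (n:ℝ)^2/(2*L+1) - n - 1 := Nat.floor_le hBpos
  have key : ∀ g : Fin n → Fin n → Bool,
      ∃ e : (Fin n → Fin (m0+1)) × (Fin m0 → Bool × Fin (m0+2)) × Fin (m0+1),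
        ∀ i, ConcatLB.evalF (ConcatLB.chunks (((List.finRange m0).map
            (fun p => ((e.2.1 p).1, ((e.2.1 p).2 : ℕ)))).take ((e.2.2 : ℕ)))) m0 ((e.1 i : ℕ))
          = List.ofFn (g i) := by
    intro g
    obtain ⟨G, A, hval, hsize⟩ := hc (fun i => List.ofFn (g i)) (by simp)
    have hm : G.size ≤ m0 := Nat.le_floor hsize
    obtain ⟨e, he⟩ := ConcatLB.exists_encoding G m0 hm
    have hne : ∀ i, G.val (A i) ≠ [] := by
      intro i
      rw [hval i]
      intro h
      have := congrArg List.length h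
      simp at this
      omega
    choose k hk using fun i => he (A i) (hne i)
    refine ⟨⟨k, e⟩, fun i => ?_⟩
    rw [hk i, hval i]
  choose f hf using key
  have hinj : Function.Injective f := by
    intro g g' hgg
    funext i
    apply List.ofFn_injective
    rw [← hf g i, ← hf g' i, hgg]
  have hcard := Fintype.card_le_of_injective f hinj
  have h1 : Fintype.card (Fin n → Fin n → Bool) = 2^(n*n) := by
    simp [Fintype.card_fun]
    rw [← pow_mul]
  have h2 : Fintype.card ((Fin n → Fin (m0+1)) × (Fin m0 → Bool × Fin (m0+2)) × Fin (m0+1))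
      = (m0+1)^n * ((2*(m0+2))^m0 * (m0+1)) := by
    simp [Fintype.card_fun]
  rw [h1, h2] at hcard
  have hcast : (2:ℝ)^(n*n) ≤ ((m0:ℝ)+1)^n * ((2*((m0:ℝ)+2))^m0 * ((m0:ℝ)+1)) := by
    exact_mod_cast hcard
  set X := Real.logb 2 ((m0:ℝ)+2) with hX
  have hpos1 : (0:ℝ) < (m0:ℝ)+1 := by positivity
  have hpos3 : (0:ℝ) < (m0:ℝ)+2 := by positivity
  have hX1 : 1 ≤ X := by
    rw [hX]
    calc (1:ℝ) = Real.logb 2 2 := (Real.logb_self_eq_one one_lt_two).symm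
    _ ≤ _ := Real.logb_le_logb_of_le one_lt_two two_pos (by linarith)
  have hlog := Real.logb_le_logb_of_le one_lt_two
      (by positivity : (0:ℝ) < (2:ℝ)^(n*n)) hcast
  rw [Real.logb_pow, Real.logb_self_eq_one one_lt_two,
      Real.logb_mul (ne_of_gt (pow_pos hpos1 n)) (by positivity),
      Real.logb_mul (by positivity) (ne_of_gt hpos1),
      Real.logb_pow, Real.logb_pow,
      Real.logb_mul two_ne_zero (ne_of_gt hpos3),
      Real.logb_self_eq_one one_lt_two] at hlog
  have hlb1 : Real.logb 2 ((m0:ℝ)+1) ≤ X :=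
    Real.logb_le_logb_of_le one_lt_two hpos1 (by linarith)
  have hsum : ((n:ℝ)*n) ≤ ((n:ℝ)+1)*X + (m0:ℝ)*(1+X) := by
    push_cast at hlog
    nlinarith [mul_le_mul_of_nonneg_left hlb1 (show (0:ℝ) ≤ (n:ℝ) by positivity), hlb1]
  have hstrict : ((n:ℝ)*n) < ((m0:ℝ)+(n:ℝ)+1)*(1+X) := by nlinarith
  have hden : (0:ℝ) < 2*L+1 := by linarith
  have hmul : ((m0:ℝ)+(n:ℝ)+1) * (2*L+1) ≤ (n:ℝ)^2 := by
    rw [← le_div_iff₀ hden]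
    linarith
  have hm0n2 : (m0:ℝ)+2 ≤ (n:ℝ)^2 := by
    nlinarith [mul_nonneg (show (0:ℝ) ≤ (m0:ℝ)+(n:ℝ)+1 by positivity)
      (show (0:ℝ) ≤ 2*L-2 by linarith)]
  have h2L : X ≤ 2*L := by
    rw [hX, hLdef]
    calc Real.logb 2 ((m0:ℝ)+2) ≤ Real.logb 2 ((n:ℝ)^2) :=
      Real.logb_le_logb_of_le one_lt_two hpos3 hm0n2
    _ = 2 * Real.logb 2 n := by rw [Real.logb_pow]; norm_num
  have hfin : ((m0:ℝ)+(n:ℝ)+1) * (1+X) ≤ (n:ℝ)^2 :=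
    le_trans (mul_le_mul_of_nonneg_left (by linarith) (by positivity)) hmul
  nlinarith
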